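/- Let A and B be n×n real symmetric matrices such that rank(A − B) ≤ r. Then the number of eigenvalues of A lying in any interval (−∞, t] differs from the number of eigenvalues of B in (−∞, t] by at most r. Equivalently, the Kolmogorov–Smirnov distance between the empirical spectral distributions of A and B is at most r/n. -/

import Mathlib

open Finset Module Submodule RealInnerProductSpace

noncomputable section Aux

variable {n : ℕ} {A : Matrix (Fin n) (Fin n) ℝ}

lemma aux_apply (hA : A.IsHermitian) (j : Fin n) :
    Matrix.toEuclideanLin A (hA.eigenvectorBasis j)
      = hA.eigenvalues j • hA.eigenvectorBasis j := by
  apply (WithLp.equiv 2 _).injective.eq_iff.mp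
  simpa [Matrix.toEuclideanLin_apply] using hA.mulVec_eigenvectorBasis j

lemma aux_quad (hA : A.IsHermitian) (x : EuclideanSpace ℝ (Fin n)) :
    ⟪x, Matrix.toEuclideanLin A x⟫
      = ∑ i, hA.eigenvalues i * (hA.eigenvectorBasis.repr x i)^2 := by
  have hsym := Matrix.isHermitian_iff_isSymmetric.mp hA
  rw [← (hA.eigenvectorBasis).sum_inner_mul_inner x (Matrix.toEuclideanLin A x)]
  refine Finset.sum_congr rfl fun i _ => ?_
  have h1 : ⟪hA.eigenvectorBasis i, Matrix.toEuclideanLin A x⟫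
      = hA.eigenvalues i * ⟪hA.eigenvectorBasis i, x⟫ := by
    rw [← hsym, aux_apply hA i, real_inner_smul_left]
  rw [h1, OrthonormalBasis.repr_apply_apply, real_inner_comm x]
  ring

lemma aux_norm {ι : Type*} [Fintype ι] {E : Type*} [NormedAddCommGroup E]
    [InnerProductSpace ℝ E] (b : OrthonormalBasis ι ℝ E) (x : E) :
    ‖x‖^2 = ∑ i, (b.repr x i)^2 := by
  rw [← real_inner_self_eq_norm_sq, ← b.sum_inner_mul_inner x x]
  refine Finset.sum_congr rfl fun i _ => ?_
  rw [OrthonormalBasis.repr_apply_apply, real_inner_comm x]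
  ring

lemma aux_repr_zero {ι : Type*} [Fintype ι] {E : Type*} [NormedAddCommGroup E]
    [InnerProductSpace ℝ E] (b : OrthonormalBasis ι ℝ E) (s : Finset ι)
    {x : E} (hx : x ∈ Submodule.span ℝ (b '' s)) {j : ι} (hj : j ∉ s) :
    b.repr x j = 0 := by
  rw [OrthonormalBasis.repr_apply_apply]
  induction hx using Submodule.span_induction with
  | mem y hy =>
    obtain ⟨i, hi, rfl⟩ := hy
    exact b.orthonormal.2 (fun h : j = i => hj (h ▸ hi))
  | zero => simp
  | add y z _ _ hy hz => rw [inner_add_right, hy, hz, add_zero]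
  | smul c y _ hy => rw [inner_smul_right, hy, mul_zero]

lemma aux_finrank_span {ι : Type*} [Fintype ι] {E : Type*} [NormedAddCommGroup E]
    [InnerProductSpace ℝ E] (b : OrthonormalBasis ι ℝ E) (s : Finset ι) :
    finrank ℝ (Submodule.span ℝ (b '' s)) = s.card := by
  classical
  have hli := b.orthonormal.linearIndependent
  have hinj : Function.Injective b := hli.injective
  rw [show (b '' ↑s : Set E) = ↑(s.image b) by simp [Finset.coe_image],
    finrank_span_finset_eq_card, Finset.card_image_of_injective _ hinj]
  refine ((linearIndepOn_id_range_iff hinj).mpr hli).mono ?_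
  intro x hx
  obtain ⟨i, -, rfl⟩ := Finset.mem_image.mp hx
  exact Set.mem_range_self i

end Aux

noncomputable section Main

open Matrix

variable {n : ℕ} {A B : Matrix (Fin n) (Fin n) ℝ}

lemma aux_quad_le (hA : A.IsHermitian) (t : ℝ) (s : Finset (Fin n))
    (hs : ∀ i ∈ s, hA.eigenvalues i ≤ t) {x : EuclideanSpace ℝ (Fin n)}
    (hx : x ∈ Submodule.span ℝ (hA.eigenvectorBasis '' s)) :
    ⟪x, Matrix.toEuclideanLin A x⟫ ≤ t * ‖x‖^2 := by
  rw [aux_quad hA, aux_norm hA.eigenvectorBasis, Finset.mul_sum]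
  refine Finset.sum_le_sum fun i _ => ?_
  by_cases hi : i ∈ s
  · have := sq_nonneg (hA.eigenvectorBasis.repr x i)
    nlinarith [hs i hi]
  · rw [aux_repr_zero hA.eigenvectorBasis s hx hi]; simp

lemma aux_quad_gt (hB : B.IsHermitian) (t : ℝ) (s : Finset (Fin n))
    (hs : ∀ i ∈ s, t < hB.eigenvalues i) {x : EuclideanSpace ℝ (Fin n)}
    (hx : x ∈ Submodule.span ℝ (hB.eigenvectorBasis '' s)) (hx0 : x ≠ 0) :
    t * ‖x‖^2 < ⟪x, Matrix.toEuclideanLin B x⟫ := by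
  rw [aux_quad hB, aux_norm hB.eigenvectorBasis, Finset.mul_sum, ← sub_pos,
    ← Finset.sum_sub_distrib]
  have hterm : ∀ i, 0 ≤ hB.eigenvalues i * (hB.eigenvectorBasis.repr x i)^2
      - t * (hB.eigenvectorBasis.repr x i)^2 := by
    intro i
    by_cases hi : i ∈ s
    · nlinarith [hs i hi, sq_nonneg (hB.eigenvectorBasis.repr x i)]
    · rw [aux_repr_zero hB.eigenvectorBasis s hx hi]; simp
  obtain ⟨j, hj⟩ : ∃ j, hB.eigenvectorBasis.repr x j ≠ 0 := by
    by_contra h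
    push_neg at h
    apply hx0
    apply hB.eigenvectorBasis.repr.injective
    ext j
    simpa using h j
  have hjs : j ∈ s := by
    by_contra hjs
    exact hj (aux_repr_zero hB.eigenvectorBasis s hx hjs)
  refine Finset.sum_pos' (fun i _ => hterm i) ⟨j, Finset.mem_univ j, ?_⟩
  nlinarith [hs j hjs, (pow_pos (abs_pos.mpr hj) 2), sq_abs (hB.eigenvectorBasis.repr x j)]

lemma key_le {r : ℕ} (hA : A.IsHermitian) (hB : B.IsHermitian)
    (hr : (A - B).rank ≤ r) (t : ℝ) :
    (univ.filter fun i => hA.eigenvalues i ≤ t).card ≤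
      (univ.filter fun i => hB.eigenvalues i ≤ t).card + r := by
  by_contra hlt
  push_neg at hlt
  set sA := univ.filter fun i => hA.eigenvalues i ≤ t with hsA
  set sB := univ.filter fun i => hB.eigenvalues i ≤ t with hsB
  set sBc := univ.filter fun i => ¬ hB.eigenvalues i ≤ t with hsBc
  have hcardBc : sBc.card = n - sB.card := by
    rw [hsBc, Finset.filter_not, Finset.card_sdiff_of_subset (Finset.filter_subset _ _)]
    simp [hsB]
  have hsBle : sB.card ≤ n := by
    simpa using Finset.card_le_card (Finset.subset_univ sB)
  set V := Submodule.span ℝ (hA.eigenvectorBasis '' sA) with hVdef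
  set W := Submodule.span ℝ (hB.eigenvectorBasis '' sBc) with hWdef
  set K := LinearMap.ker (Matrix.toEuclideanLin (A - B)) with hKdef
  have hV : Module.finrank ℝ V = sA.card := aux_finrank_span _ _
  have hW : Module.finrank ℝ W = sBc.card := aux_finrank_span _ _
  have hKr : n ≤ Module.finrank ℝ K + r := by
    have hrank : (A - B).rank
        = Module.finrank ℝ (LinearMap.range (Matrix.toEuclideanLin (A - B))) := by
      rw [Matrix.rank_eq_finrank_range_toLin (A - B) (EuclideanSpace.basisFun (Fin n) ℝ).toBasis
        (EuclideanSpace.basisFun (Fin n) ℝ).toBasis]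
      rfl
    rw [hrank] at hr
    have h1 : Module.finrank ℝ (LinearMap.range (Matrix.toEuclideanLin (A - B)))
        + Module.finrank ℝ K = n := by
      simpa using LinearMap.finrank_range_add_finrank_ker (Matrix.toEuclideanLin (A - B))
    omega
  have e1 := Submodule.finrank_sup_add_finrank_inf_eq V W
  have e2 := Submodule.finrank_sup_add_finrank_inf_eq (V ⊓ W) K
  have hle1 : Module.finrank ℝ ↥(V ⊔ W) ≤ n := by
    simpa [finrank_euclideanSpace] using Submodule.finrank_le (V ⊔ W)
  have hle2 : Module.finrank ℝ ↥(V ⊓ W ⊔ K) ≤ n := by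
    simpa [finrank_euclideanSpace] using Submodule.finrank_le (V ⊓ W ⊔ K)
  have hpos : 0 < Module.finrank ℝ ↥(V ⊓ W ⊓ K) := by omega
  obtain ⟨x, hx0⟩ := Module.finrank_pos_iff_exists_ne_zero.mp hpos
  have hxV : (x : EuclideanSpace ℝ (Fin n)) ∈ V := x.2.1.1
  have hxW : (x : EuclideanSpace ℝ (Fin n)) ∈ W := x.2.1.2
  have hxK : (x : EuclideanSpace ℝ (Fin n)) ∈ K := x.2.2
  have hxne : (x : EuclideanSpace ℝ (Fin n)) ≠ 0 := fun h =>
    hx0 (Subtype.ext h)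
  have hAB : Matrix.toEuclideanLin A (x : EuclideanSpace ℝ (Fin n))
      = Matrix.toEuclideanLin B (x : EuclideanSpace ℝ (Fin n)) := by
    have h0 : Matrix.toEuclideanLin (A - B) (x : EuclideanSpace ℝ (Fin n)) = 0 := hxK
    rw [map_sub, LinearMap.sub_apply, sub_eq_zero] at h0
    exact h0
  have h1 : ⟪(x : EuclideanSpace ℝ (Fin n)), Matrix.toEuclideanLin A x⟫ ≤ t * ‖(x : EuclideanSpace ℝ (Fin n))‖^2 :=
    aux_quad_le hA t sA (fun i hi => (Finset.mem_filter.mp hi).2) hxV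
  have h2 : t * ‖(x : EuclideanSpace ℝ (Fin n))‖^2 < ⟪(x : EuclideanSpace ℝ (Fin n)), Matrix.toEuclideanLin B x⟫ :=
    aux_quad_gt hB t sBc (fun i hi => lt_of_not_ge (Finset.mem_filter.mp hi).2) hxW hxne
  rw [hAB] at h1
  linarith



lemma aux_rank_neg {m : Type*} [Fintype m] [DecidableEq m] (M : Matrix m m ℝ) :
    (-M).rank = M.rank := by
  rw [Matrix.rank, Matrix.rank, show (-M).mulVecLin = -M.mulVecLin by
    ext x; simp [Matrix.neg_mulVec], LinearMap.range_neg]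



end Main



open Finset

/-- Rank inequality: if `A` and `B` are real symmetric `n×n` matrices with
`rank (A − B) ≤ r`, then for every `t` the number of eigenvalues of `A` in
`(−∞, t]` differs from that of `B` by at most `r`; equivalently the
Kolmogorov–Smirnov distance between the empirical spectral distributions is at
most `r/n`. -/
theorem stmt_3 (n r : ℕ) (A B : Matrix (Fin n) (Fin n) ℝ)
    (hA : A.IsHermitian) (hB : B.IsHermitian)
    (hr : (A - B).rank ≤ r) :
    (∀ t : ℝ,
      |((univ.filter fun i => hA.eigenvalues i ≤ t).card : ℝ) -
        ((univ.filter fun i => hB.eigenvalues i ≤ t).card : ℝ)| ≤ r) ∧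
    (∀ t : ℝ,
      |((univ.filter fun i => hA.eigenvalues i ≤ t).card : ℝ) / n -
        ((univ.filter fun i => hB.eigenvalues i ≤ t).card : ℝ) / n| ≤ r / n) := by
  have hr' : (B - A).rank ≤ r := by
    rw [show B - A = -(A - B) from (neg_sub A B).symm, aux_rank_neg]
    exact hr
  have main : ∀ t : ℝ,
      |((univ.filter fun i => hA.eigenvalues i ≤ t).card : ℝ) -
        ((univ.filter fun i => hB.eigenvalues i ≤ t).card : ℝ)| ≤ r := by
    intro t
    have h1 : ((univ.filter fun i => hA.eigenvalues i ≤ t).card : ℝ)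
        ≤ ((univ.filter fun i => hB.eigenvalues i ≤ t).card : ℝ) + r := by
      exact_mod_cast key_le hA hB hr t
    have h2 : ((univ.filter fun i => hB.eigenvalues i ≤ t).card : ℝ)
        ≤ ((univ.filter fun i => hA.eigenvalues i ≤ t).card : ℝ) + r := by
      exact_mod_cast key_le hB hA hr' t
    rw [abs_sub_le_iff]
    constructor <;> linarith
  refine ⟨main, fun t => ?_⟩
  rcases Nat.eq_zero_or_pos n with hn | hn
  · subst hn
    simp
  · rw [div_sub_div_same, abs_div, abs_of_nonneg (by positivity : (0:ℝ) ≤ (n:ℝ))]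
    gcongr
    exact main t
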